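/- (Lemma: from explicit Euler to arbitrary-order Runge-Kutta.) Let s ≥ 1 and let a, b : ℕ → ℕ → ℝ be nonnegative Shu-Osher coefficients with Σ_{k=0}^{i-1} a i k = 1 for every 1 ≤ i ≤ s, and such that b i k = 0 whenever a i k = 0. Let w ∈ ℂ be any complex number and suppose each scaled explicit-Euler substep is contractive: for all 1 ≤ i ≤ s and k < i with a i k > 0, |1 + (b i k / a i k) * w| ≤ 1. Then the Runge-Kutta iterates defined by y 0 = y₀ and y i = Σ_{k=0}^{i-1} (a i k * y k + b i k * w * y k) for 1 ≤ i ≤ s satisfy |y s| ≤ |y₀|. -/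

import Mathlib

/-- From explicit Euler to arbitrary-order Runge–Kutta: if every scaled explicit-Euler
substep is contractive, then the Shu–Osher Runge–Kutta update is contractive. -/
theorem rk_contractive_of_euler_contractive
    (s : ℕ) (hs : 1 ≤ s) (a b : ℕ → ℕ → ℝ)
    (ha : ∀ i k, 0 ≤ a i k) (hb : ∀ i k, 0 ≤ b i k)
    (hsum : ∀ i, 1 ≤ i → i ≤ s → ∑ k ∈ Finset.range i, a i k = 1)
    (hb0 : ∀ i k, a i k = 0 → b i k = 0)
    (w : ℂ)
    (heuler : ∀ i k, 1 ≤ i → i ≤ s → k < i → 0 < a i k →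
      ‖1 + ((b i k / a i k : ℝ) : ℂ) * w‖ ≤ 1)
    (y₀ : ℂ) (y : ℕ → ℂ) (hy0 : y 0 = y₀)
    (hy : ∀ i, 1 ≤ i → i ≤ s →
      y i = ∑ k ∈ Finset.range i, (((a i k : ℝ) : ℂ) * y k + ((b i k : ℝ) : ℂ) * w * y k)) :
    ‖y s‖ ≤ ‖y₀‖ := by
  suffices h : ∀ i, i ≤ s → ‖y i‖ ≤ ‖y₀‖ from h s le_rfl
  intro i
  induction i using Nat.strong_induction_on with
  | _ i ih =>
    intro his
    rcases Nat.eq_zero_or_pos i with hi0 | hi1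
    · simp [hi0, hy0]
    · rw [hy i hi1 his]
      calc ‖∑ k ∈ Finset.range i,
            (((a i k : ℝ) : ℂ) * y k + ((b i k : ℝ) : ℂ) * w * y k)‖
          ≤ ∑ k ∈ Finset.range i,
            ‖((a i k : ℝ) : ℂ) * y k + ((b i k : ℝ) : ℂ) * w * y k‖ :=
            norm_sum_le _ _
        _ ≤ ∑ k ∈ Finset.range i, a i k * ‖y₀‖ := by
            apply Finset.sum_le_sum
            intro k hk
            rw [Finset.mem_range] at hk
            have key : ‖((a i k : ℝ) : ℂ) + ((b i k : ℝ) : ℂ) * w‖ ≤ a i k := by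
              rcases eq_or_lt_of_le (ha i k) with haz | hap
              · have hbz := hb0 i k haz.symm
                simp [← haz, hbz]
              · have := heuler i k hi1 his hk hap
                have heq : ((a i k : ℝ) : ℂ) + ((b i k : ℝ) : ℂ) * w
                    = ((a i k : ℝ) : ℂ) * (1 + ((b i k / a i k : ℝ) : ℂ) * w) := by
                  have : (a i k : ℂ) ≠ 0 := by exact_mod_cast hap.ne'
                  push_cast
                  field_simp
                rw [heq, norm_mul]
                calc ‖((a i k : ℝ) : ℂ)‖ *
                      ‖1 + ((b i k / a i k : ℝ) : ℂ) * w‖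
                    ≤ ‖((a i k : ℝ) : ℂ)‖ * 1 := by
                      exact mul_le_mul_of_nonneg_left this (by positivity)
                  _ = a i k := by
                      rw [mul_one, Complex.norm_real, Real.norm_eq_abs, abs_of_pos hap]
            have hterm : ((a i k : ℝ) : ℂ) * y k + ((b i k : ℝ) : ℂ) * w * y k
                = (((a i k : ℝ) : ℂ) + ((b i k : ℝ) : ℂ) * w) * y k := by ring
            rw [hterm, norm_mul]
            exact mul_le_mul key (ih k hk (le_of_lt (hk.trans_le his)))
              (by positivity) (ha i k)
        _ = ‖y₀‖ := by
            rw [← Finset.sum_mul, hsum i hi1 his, one_mul]
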